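/- The process S_n = (n+1)·u_n, n ≥ 0, is a mean-zero martingale with respect to the filtration (F_n) under the symmetric measure η; in particular ∫_X u_n dη = 0 for every n. -/

import Mathlib

open MeasureTheory Filter
open scoped ENNReal

/-- The Euler path space: a point is an infinite edge path in the Euler graph,
`x n : Fin (n+2)` being the label of the edge chosen from level `n` to level `n+1`. -/
abbrev EulerPath : Type := ∀ n : ℕ, Fin (n + 2)

/-- Vertex labels: `kv x n` is the `k` with the path `x` passing through vertex `(n,k)`.
A label `(x n : ℕ) ≤ kv x n` is a left turn (edge to `(n+1, kv x n)`), a larger label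
is a right turn (edge to `(n+1, kv x n + 1)`). -/
def kv (x : EulerPath) : ℕ → ℕ
  | 0 => 0
  | n + 1 => if (x n : ℕ) ≤ kv x n then kv x n else kv x n + 1

/-- The symmetric measure: the product over `n` of the uniform probability measures on
`Fin (n+2)`, characterized as the probability measure giving each cylinder of length `n`
the measure `∏_{i<n} 1/(i+2)`. -/
def IsSymmetricMeasure (η : Measure EulerPath) : Prop :=
  IsProbabilityMeasure η ∧
    ∀ (n : ℕ) (c : EulerPath),
      η {x | ∀ i < n, x i = c i} = ∏ i ∈ Finset.range n, ((i : ℝ≥0∞) + 2)⁻¹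

/-- `u_n = 2 k_n - n` (an integer, viewed in `ℝ`). -/
def u (n : ℕ) (x : EulerPath) : ℝ :=
  ((2 * (kv x n : ℤ) - (n : ℤ) : ℤ) : ℝ)

/-- `F_n`: the σ-algebra on `X` generated by the coordinates `x_0, …, x_{n-1}`. -/
def coordAlg (n : ℕ) : MeasurableSpace EulerPath :=
  ⨆ i : Fin n, MeasurableSpace.comap (fun x => x i) inferInstance

/-- The filtration `(F_n)` on `X`. -/
def coordFil : Filtration ℕ (inferInstance : MeasurableSpace EulerPath) where
  seq := coordAlg
  mono' := by
    intro i j hij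
    exact iSup_le fun v => le_iSup_of_le (⟨v.1, lt_of_lt_of_le v.2 hij⟩ : Fin j) le_rfl
  le' := fun i => iSup_le fun v => Measurable.comap_le (measurable_pi_apply _)

/-- Finite prefix of a path. -/
def projE (n : ℕ) (x : EulerPath) : ∀ i : Fin n, Fin ((i : ℕ) + 2) := fun i => x i

/-- `kv` computed from a finite prefix. -/
def kvF : (n : ℕ) → (∀ i : Fin n, Fin ((i : ℕ) + 2)) → ℕ
  | 0, _ => 0
  | n + 1, c =>
    if (c (Fin.last n) : ℕ) ≤ kvF n (fun i => c i.castSucc) then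
      kvF n (fun i => c i.castSucc)
    else kvF n (fun i => c i.castSucc) + 1

lemma kv_eq_kvF (x : EulerPath) : ∀ n, kv x n = kvF n (projE n x)
  | 0 => rfl
  | n + 1 => by
    have h : (fun i : Fin n => projE (n+1) x i.castSucc) = projE n x := rfl
    simp only [kv, kvF, h, kv_eq_kvF x n]
    rfl

lemma kvF_le : ∀ n (c : ∀ i : Fin n, Fin ((i : ℕ) + 2)), kvF n c ≤ n
  | 0, _ => le_rfl
  | n + 1, c => by
    have := kvF_le n (fun i => c i.castSucc)
    simp only [kvF]; split <;> omega

lemma measurable_projE (n : ℕ) : Measurable[coordAlg n] (projE n) := by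
  letI := coordAlg n
  refine measurable_pi_iff.2 fun i => ?_
  have h1 : Measurable[MeasurableSpace.comap (fun x : EulerPath => x (i : ℕ)) inferInstance]
      (fun x : EulerPath => x (i : ℕ)) := Measurable.of_comap_le le_rfl
  exact h1.mono (le_iSup (fun j : Fin n =>
    MeasurableSpace.comap (fun x : EulerPath => x (j : ℕ)) inferInstance) i) le_rfl

/-- Cylinder set determined by a finite prefix. -/
def cylF (n : ℕ) (c : ∀ i : Fin n, Fin ((i : ℕ) + 2)) : Set EulerPath :=
  projE n ⁻¹' {c}

/-- Extension of a finite prefix to a full path (by `0`s). -/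
def extE (n : ℕ) (c : ∀ i : Fin n, Fin ((i : ℕ) + 2)) : EulerPath :=
  fun i => if h : i < n then c ⟨i, h⟩ else 0

lemma mem_cylF {n : ℕ} {c : ∀ i : Fin n, Fin ((i : ℕ) + 2)} {x : EulerPath} :
    x ∈ cylF n c ↔ ∀ i : Fin n, x (i : ℕ) = c i := by
  constructor
  · intro h i; exact congrFun h i
  · intro h; funext i; exact h i

lemma cylF_eq_setOf (n : ℕ) (c : ∀ i : Fin n, Fin ((i : ℕ) + 2)) :
    cylF n c = {x | ∀ i < n, x i = extE n c i} := by
  ext x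
  simp only [mem_cylF, Set.mem_setOf_eq, extE]
  constructor
  · intro h i hi; rw [dif_pos hi]; exact h ⟨i, hi⟩
  · intro h i; have := h i i.2; rwa [dif_pos i.2] at this

lemma measurableSet_cylF (n : ℕ) (c : ∀ i : Fin n, Fin ((i : ℕ) + 2)) :
    MeasurableSet[coordAlg n] (cylF n c) :=
  measurable_projE n (MeasurableSet.singleton c)

lemma eta_cylF {η : Measure EulerPath} (hη : IsSymmetricMeasure η) (n : ℕ)
    (c : ∀ i : Fin n, Fin ((i : ℕ) + 2)) :
    η (cylF n c) = ∏ i ∈ Finset.range n, ((i : ℝ≥0∞) + 2)⁻¹ := by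
  rw [cylF_eq_setOf]
  exact hη.2 n (extE n c)

/-- Decomposition of a length-`n` cylinder into the `n+2` cylinders of length `n+1`. -/
lemma cylF_eq_iUnion (n : ℕ) (c : ∀ i : Fin n, Fin ((i : ℕ) + 2)) :
    cylF n c = ⋃ j : Fin (n + 2), cylF (n + 1) (Fin.snoc c j) := by
  ext x
  simp only [Set.mem_iUnion, mem_cylF]
  constructor
  · intro h
    refine ⟨x n, fun i => ?_⟩
    refine Fin.lastCases ?_ (fun i' => ?_) i
    · simp [Fin.snoc_last]
    · simpa [Fin.snoc_castSucc] using h i'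
  · rintro ⟨j, h⟩ i
    have := h i.castSucc
    simpa [Fin.snoc_castSucc] using this

lemma kvF_snoc (n : ℕ) (c : ∀ i : Fin n, Fin ((i : ℕ) + 2)) (j : Fin (n + 2)) :
    kvF (n + 1) (Fin.snoc c j) = if (j : ℕ) ≤ kvF n c then kvF n c else kvF n c + 1 := by
  have h : (fun i : Fin n => (Fin.snoc c j : ∀ i : Fin (n+1), Fin ((i:ℕ)+2)) i.castSucc) = c := by
    funext i; simp [Fin.snoc_castSucc]
  simp only [kvF, h, Fin.snoc_last]

lemma kv_const_on_cylF {n : ℕ} {c : ∀ i : Fin n, Fin ((i : ℕ) + 2)} {x : EulerPath}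
    (hx : x ∈ cylF n c) : kv x n = kvF n c := by
  rw [kv_eq_kvF]; exact congrArg (kvF n) hx

lemma coordAlg_le (n : ℕ) : coordAlg n ≤ (inferInstance : MeasurableSpace EulerPath) :=
  iSup_le fun _ => Measurable.comap_le (measurable_pi_apply _)

lemma cylF_measurableSet' (n : ℕ) (c : ∀ i : Fin n, Fin ((i : ℕ) + 2)) :
    MeasurableSet (cylF n c) :=
  coordAlg_le n _ (measurableSet_cylF n c)

lemma measurable_u (n : ℕ) : Measurable[coordAlg n] (u n) := by
  have h : u n = (fun c : ∀ i : Fin n, Fin ((i : ℕ) + 2) =>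
      ((2 * (kvF n c : ℤ) - (n : ℤ) : ℤ) : ℝ)) ∘ projE n := by
    funext x; simp [u, kv_eq_kvF, Function.comp]
  rw [h]
  exact (measurable_of_countable _).comp (measurable_projE n)

lemma kv_le (x : EulerPath) (n : ℕ) : kv x n ≤ n := by
  rw [kv_eq_kvF]; exact kvF_le n _

lemma integrable_aS (η : Measure EulerPath) [IsProbabilityMeasure η] (a : ℝ) (n : ℕ) :
    Integrable (fun x => a * u n x) η := by
  have hmeas : Measurable (fun x => a * u n x) :=
    measurable_const.mul ((measurable_u n).mono (coordAlg_le n) le_rfl)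
  refine Integrable.mono' (integrable_const (|a| * n)) hmeas.aestronglyMeasurable
    (ae_of_all _ fun x => ?_)
  rw [norm_mul, Real.norm_eq_abs, Real.norm_eq_abs]
  refine mul_le_mul_of_nonneg_left ?_ (abs_nonneg a)
  rw [u, ← Int.cast_abs]
  have hk := kv_le x n
  have : |2 * (kv x n : ℤ) - (n : ℤ)| ≤ (n : ℤ) := by
    rw [abs_le]; constructor <;> omega
  exact_mod_cast this

/-- The set integral of `a * u n` over a length-`n` cylinder. -/
lemma setIntegral_u_cyl (η : Measure EulerPath) (a : ℝ) (n : ℕ)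
    (c : ∀ i : Fin n, Fin ((i : ℕ) + 2)) :
    ∫ x in cylF n c, a * u n x ∂η
      = (η (cylF n c)).toReal * (a * ((2 * (kvF n c : ℤ) - (n : ℤ) : ℤ) : ℝ)) := by
  rw [setIntegral_congr_fun (cylF_measurableSet' n c)
    (g := fun _ => a * ((2 * (kvF n c : ℤ) - (n : ℤ) : ℤ) : ℝ))
    (fun x hx => by rw [u, kv_const_on_cylF hx]), setIntegral_const, smul_eq_mul, measureReal_def]

lemma cylF_disjoint {n : ℕ} {c c' : ∀ i : Fin n, Fin ((i : ℕ) + 2)} (h : c ≠ c') :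
    Disjoint (cylF n c) (cylF n c') := by
  rw [Set.disjoint_left]
  intro x hx hx'
  exact h ((Set.eq_of_mem_singleton hx).symm.trans (Set.eq_of_mem_singleton hx'))

lemma snoc_injective {n : ℕ} (c : ∀ i : Fin n, Fin ((i : ℕ) + 2)) :
    Function.Injective (fun j : Fin (n + 2) =>
      (Fin.snoc c j : ∀ i : Fin (n + 1), Fin ((i : ℕ) + 2))) := by
  intro j j' h
  have := congrFun h (Fin.last n)
  simpa [Fin.snoc_last] using this

lemma sum_ite_count {k n : ℕ} (hk : k ≤ n) (A B : ℝ) :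
    ∑ j : Fin (n + 2), (if (j : ℕ) ≤ k then A else B)
      = ((k : ℝ) + 1) * A + (((n : ℝ) + 1) - k) * B := by
  rw [Fin.sum_univ_eq_sum_range (fun i => if i ≤ k then A else B) (n + 2),
    Finset.sum_ite]
  have h1 : Finset.filter (fun i => i ≤ k) (Finset.range (n + 2)) = Finset.range (k + 1) := by
    ext i; simp only [Finset.mem_filter, Finset.mem_range]; omega
  have h2 : (Finset.filter (fun i => ¬ i ≤ k) (Finset.range (n + 2))).card = n + 1 - k := by
    rw [Finset.filter_not, Finset.card_sdiff_of_subset (Finset.filter_subset _ _), h1,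
      Finset.card_range, Finset.card_range]
    omega
  rw [h1, Finset.sum_const, Finset.sum_const, h2, Finset.card_range, nsmul_eq_mul, nsmul_eq_mul]
  push_cast [Nat.cast_sub (by omega : k ≤ n + 1)]
  ring

lemma eta_cylF_ne_top {η : Measure EulerPath} (hη : IsSymmetricMeasure η) (n : ℕ)
    (c : ∀ i : Fin n, Fin ((i : ℕ) + 2)) : η (cylF n c) ≠ ⊤ := by
  haveI : IsProbabilityMeasure η := hη.1
  exact (measure_lt_top η _).ne

lemma eta_cylF_snoc {η : Measure EulerPath} (hη : IsSymmetricMeasure η) (n : ℕ)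
    (c : ∀ i : Fin n, Fin ((i : ℕ) + 2)) (j : Fin (n + 2)) :
    (η (cylF (n + 1) (Fin.snoc c j))).toReal
      = (η (cylF n c)).toReal * ((n : ℝ) + 2)⁻¹ := by
  rw [eta_cylF hη (n + 1), Finset.prod_range_succ, ← eta_cylF hη n c, ENNReal.toReal_mul,
    ENNReal.toReal_inv]
  norm_num [ENNReal.toReal_add]

/-- The crucial computation: the martingale step on a single cylinder. -/
lemma key_step {η : Measure EulerPath} (hη : IsSymmetricMeasure η) (n : ℕ)
    (c : ∀ i : Fin n, Fin ((i : ℕ) + 2)) :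
    ∫ x in cylF n c, ((n : ℝ) + 1) * u n x ∂η
      = ∫ x in cylF n c, (((n + 1 : ℕ) : ℝ) + 1) * u (n + 1) x ∂η := by
  haveI : IsProbabilityMeasure η := hη.1
  set k := kvF n c with hkdef
  have hk : k ≤ n := kvF_le n c
  have hdec : ∫ x in cylF n c, (((n + 1 : ℕ) : ℝ) + 1) * u (n + 1) x ∂η
      = ∑ j : Fin (n + 2),
          ∫ x in cylF (n + 1) (Fin.snoc c j), (((n + 1 : ℕ) : ℝ) + 1) * u (n + 1) x ∂η := by
    rw [cylF_eq_iUnion n c]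
    exact integral_iUnion_fintype (fun j => cylF_measurableSet' _ _)
      (fun j j' hjj' => cylF_disjoint (fun h => hjj' (snoc_injective c h)))
      (fun j => (integrable_aS η _ _).integrableOn)
  rw [hdec, setIntegral_u_cyl]
  have hterm : ∀ j : Fin (n + 2),
      ∫ x in cylF (n + 1) (Fin.snoc c j), (((n + 1 : ℕ) : ℝ) + 1) * u (n + 1) x ∂η
        = (η (cylF n c)).toReal * ((n : ℝ) + 2)⁻¹ *
            (if (j : ℕ) ≤ k then
              (((n + 1 : ℕ) : ℝ) + 1) * ((2 * (k : ℤ) - ((n : ℤ) + 1) : ℤ) : ℝ)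
            else
              (((n + 1 : ℕ) : ℝ) + 1) * ((2 * (k : ℤ) + 2 - ((n : ℤ) + 1) : ℤ) : ℝ)) := by
    intro j
    rw [setIntegral_u_cyl, eta_cylF_snoc hη, kvF_snoc]
    split <;> push_cast <;> ring
  rw [Finset.sum_congr rfl (fun j _ => hterm j), ← Finset.mul_sum, sum_ite_count hk]
  have hne : ((n : ℝ) + 2) ≠ 0 := by positivity
  push_cast
  field_simp
  ring

lemma coordAlg_le_comap (n : ℕ) :
    coordAlg n ≤ MeasurableSpace.comap (projE n) ⊤ := by
  refine iSup_le fun i s hs => ?_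
  obtain ⟨t, -, rfl⟩ := hs
  exact ⟨(fun c : ∀ i : Fin n, Fin ((i : ℕ) + 2) => c i) ⁻¹' t, trivial, rfl⟩

lemma exists_preimage {n : ℕ} {s : Set EulerPath} (hs : MeasurableSet[coordAlg n] s) :
    ∃ t : Set (∀ i : Fin n, Fin ((i : ℕ) + 2)), s = projE n ⁻¹' t := by
  obtain ⟨t, -, ht⟩ := coordAlg_le_comap n s hs
  exact ⟨t, ht.symm⟩

lemma setIntegral_step {η : Measure EulerPath} (hη : IsSymmetricMeasure η) (n : ℕ)
    {s : Set EulerPath} (hs : MeasurableSet[coordAlg n] s) :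
    ∫ x in s, ((n : ℝ) + 1) * u n x ∂η
      = ∫ x in s, (((n + 1 : ℕ) : ℝ) + 1) * u (n + 1) x ∂η := by
  classical
  haveI : IsProbabilityMeasure η := hη.1
  obtain ⟨t, rfl⟩ := exists_preimage hs
  have hsplit : projE n ⁻¹' t = ⋃ c ∈ (Set.toFinite t).toFinset, cylF n c := by
    ext x
    simp only [Set.mem_preimage, Set.mem_iUnion, Set.Finite.mem_toFinset, cylF,
      Set.mem_singleton_iff, exists_prop]
    exact ⟨fun h => ⟨projE n x, h, rfl⟩, fun ⟨c, hc, h⟩ => h ▸ hc⟩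
  have hmeas : ∀ c ∈ (Set.toFinite t).toFinset, MeasurableSet (cylF n c) :=
    fun c _ => cylF_measurableSet' n c
  have hdisj : Set.Pairwise ((Set.toFinite t).toFinset : Set _) (Function.onFun Disjoint (cylF n)) :=
    fun c _ c' _ h => cylF_disjoint h
  rw [hsplit, integral_biUnion_finset _ hmeas hdisj
      (fun c _ => (integrable_aS η _ _).integrableOn),
    integral_biUnion_finset _ hmeas hdisj
      (fun c _ => (integrable_aS η _ _).integrableOn)]
  exact Finset.sum_congr rfl fun c _ => key_step hη n c

/-- The process `S_n = (n+1) u_n` is a mean-zero martingale with respect to `(F_n)`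
under the symmetric measure `η`; in particular `∫ u_n dη = 0` for every `n`. -/
theorem euler_S_martingale
    (η : Measure EulerPath) (hη : IsSymmetricMeasure η) :
    Martingale (fun (n : ℕ) (x : EulerPath) => ((n : ℝ) + 1) * u n x) coordFil η ∧
      (∀ n : ℕ, ∫ x, ((n : ℝ) + 1) * u n x ∂η = 0) ∧
      (∀ n : ℕ, ∫ x, u n x ∂η = 0) := by
  haveI : IsProbabilityMeasure η := hη.1
  have hmart : Martingale (fun (n : ℕ) (x : EulerPath) => ((n : ℝ) + 1) * u n x) coordFil η := by
    refine martingale_of_setIntegral_eq_succ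
      (fun n => (measurable_const.mul (measurable_u n)).stronglyMeasurable)
      (fun n => integrable_aS η _ n) (fun n s hs => ?_)
    exact setIntegral_step hη n hs
  have hS0 : (∫ x, ((0 : ℝ) + 1) * u 0 x ∂η) = 0 := by
    have : ∀ x : EulerPath, u 0 x = 0 := fun x => by simp [u, kv]
    simp [this]
  have hmean : ∀ n : ℕ, ∫ x, ((n : ℝ) + 1) * u n x ∂η = 0 := by
    intro n
    have h := hmart.setIntegral_eq (Nat.zero_le n)
      (@MeasurableSet.univ EulerPath (coordFil 0))
    rw [Measure.restrict_univ] at h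
    rw [← h]; simpa using hS0
  refine ⟨hmart, hmean, fun n => ?_⟩
  have h := hmean n
  rw [integral_const_mul] at h
  have hne : ((n : ℝ) + 1) ≠ 0 := by positivity
  exact (mul_eq_zero.1 h).resolve_left hne
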